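/- (Upper bound on the ℤ₂-index of the Hadamard sign complex.) Let n ∈ ℕ and let H be the 2^n × 2^n Hadamard matrix indexed by 𝔽₂ⁿ, with H x y = (−1)^{⟨x,y⟩}. Then there exists a continuous map f : |S(H)| → ℝ^(2n+2) such that f(v) ≠ 0 for all v ∈ |S(H)| and f(−v) = −f(v) for all v ∈ |S(H)|; i.e., ind_{ℤ₂}(S(H)) ≤ 2n + 1 = 2·log₂(2^n) + 1, while srank(H) ≥ 2^{n/2} by Forster's theorem. -/

import Mathlib

open scoped Pointwise

/-- The realized simplex `σ_x` of the sign complex of the `2^n × 2^n` Hadamard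
matrix `H x y = (-1)^{⟨x,y⟩}`: the convex hull of
`{e_y : ⟨x,y⟩ = 0} ∪ {-e_y : ⟨x,y⟩ = 1}`. -/
noncomputable def hadamardSimplex (n : ℕ) (x : Fin n → ZMod 2) :
    Set ((Fin n → ZMod 2) → ℝ) :=
  convexHull ℝ
    ({v | ∃ y, (∑ i, x i * y i) = 0 ∧ v = Pi.single y (1 : ℝ)} ∪
     {v | ∃ y, (∑ i, x i * y i) = 1 ∧ v = -Pi.single y (1 : ℝ)})

/-- The crosspolytope realization `|S(H)|` of the Hadamard sign complex. -/
noncomputable def hadamardReal (n : ℕ) : Set ((Fin n → ZMod 2) → ℝ) :=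
  ⋃ x, (hadamardSimplex n x ∪ -(hadamardSimplex n x))

namespace HadamardIndexAux

open Finset

variable {n : ℕ}

/-- The real sign character `(-1)^{⟨x,y⟩}`. -/
noncomputable def ch (x y : Fin n → ZMod 2) : ℝ :=
  if (∑ i, x i * y i) = 0 then 1 else -1

lemma ch_mul_self (x y : Fin n → ZMod 2) : ch x y * ch x y = 1 := by
  unfold ch; split <;> norm_num

lemma ch_ne_zero (x y : Fin n → ZMod 2) : ch x y ≠ 0 := by
  unfold ch; split <;> norm_num

lemma ch_zero (x : Fin n → ZMod 2) : ch x 0 = 1 := by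
  unfold ch
  rw [if_pos]
  apply Finset.sum_eq_zero
  intro i _
  simp

lemma ch_add (x a b : Fin n → ZMod 2) : ch x (a + b) = ch x a * ch x b := by
  unfold ch
  have h : (∑ i, x i * (a + b) i) = (∑ i, x i * a i) + (∑ i, x i * b i) := by
    rw [← Finset.sum_add_distrib]
    apply Finset.sum_congr rfl
    intro i _
    simp [mul_add]
  rw [h]
  have hcases : ∀ C : ZMod 2, C = 0 ∨ C = 1 := by decide
  have h11 : (1 : ZMod 2) + 1 = 0 := by decide
  have h10 : (1 : ZMod 2) ≠ 0 := by decide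
  rcases hcases (∑ i, x i * a i) with h1 | h1 <;>
    rcases hcases (∑ i, x i * b i) with h2 | h2 <;>
    rw [h1, h2] <;> simp [h11, h10]

lemma ch_sum {ι : Type*} (x : Fin n → ZMod 2) (s : Finset ι) (g : ι → Fin n → ZMod 2) :
    ch x (∑ i ∈ s, g i) = ∏ i ∈ s, ch x (g i) := by
  induction s using Finset.cons_induction with
  | empty => simpa using ch_zero x
  | cons a s ha ih => rw [Finset.sum_cons, Finset.prod_cons, ch_add, ih]

/-- `N`-fold convolution power. -/
noncomputable def CP (N : ℕ) (v : (Fin n → ZMod 2) → ℝ) (z : Fin n → ZMod 2) : ℝ :=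
  ∑ t ∈ Finset.univ.filter (fun t : Fin N → Fin n → ZMod 2 => ∑ i, t i = z),
    ∏ i, v (t i)

lemma CP_cont (N : ℕ) (z : Fin n → ZMod 2) :
    Continuous fun v : (Fin n → ZMod 2) → ℝ => CP N v z :=
  continuous_finset_sum _ fun t _ =>
    continuous_finset_prod _ fun i _ => continuous_apply (t i)

lemma CP_neg (N : ℕ) (hN : Odd N) (v : (Fin n → ZMod 2) → ℝ) (z : Fin n → ZMod 2) :
    CP N (-v) z = -(CP N v z) := by
  unfold CP
  rw [← Finset.sum_neg_distrib]
  apply Finset.sum_congr rfl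
  intro t _
  calc ∏ i, (-v) (t i) = ∏ i, (-1 : ℝ) * v (t i) := by
        apply Finset.prod_congr rfl; intro i _; simp
  _ = (∏ _i : Fin N, (-1 : ℝ)) * ∏ i, v (t i) := Finset.prod_mul_distrib
  _ = -∏ i, v (t i) := by
        rw [Finset.prod_const, Finset.card_univ, Fintype.card_fin, hN.neg_one_pow]
        ring

lemma CP_ch (N : ℕ) (x : Fin n → ZMod 2) (lam : (Fin n → ZMod 2) → ℝ)
    (z : Fin n → ZMod 2) :
    CP N (fun y => ch x y * lam y) z = ch x z * CP N lam z := by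
  unfold CP
  rw [Finset.mul_sum]
  apply Finset.sum_congr rfl
  intro t ht
  have hz : ∑ i, t i = z := by simpa using (Finset.mem_filter.mp ht).2
  calc ∏ i, ch x (t i) * lam (t i)
      = (∏ i, ch x (t i)) * ∏ i, lam (t i) := Finset.prod_mul_distrib
  _ = ch x z * ∏ i, lam (t i) := by rw [← ch_sum, hz]

lemma CP_nonneg (N : ℕ) (lam : (Fin n → ZMod 2) → ℝ) (h : ∀ y, 0 ≤ lam y)
    (z : Fin n → ZMod 2) : 0 ≤ CP N lam z :=
  Finset.sum_nonneg fun t _ => Finset.prod_nonneg fun i _ => h _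

lemma CP_pos (N : ℕ) (lam : (Fin n → ZMod 2) → ℝ) (h : ∀ y, 0 ≤ lam y)
    (t : Fin N → Fin n → ZMod 2) (ht : ∀ i, 0 < lam (t i)) :
    0 < CP N lam (∑ i, t i) := by
  unfold CP
  apply Finset.sum_pos'
  · intro t' _; exact Finset.prod_nonneg fun i _ => h _
  · refine ⟨t, ?_, Finset.prod_pos fun i _ => ht i⟩
    simp

lemma CP_pos_exists (N : ℕ) (lam : (Fin n → ZMod 2) → ℝ) (h : ∀ y, 0 ≤ lam y)
    (z : Fin n → ZMod 2) (hz : CP N lam z ≠ 0) :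
    ∃ t : Fin N → Fin n → ZMod 2, (∀ i, 0 < lam (t i)) ∧ ∑ i, t i = z := by
  by_contra hcon
  push_neg at hcon
  apply hz
  unfold CP
  apply Finset.sum_eq_zero
  intro t ht
  have hz' : ∑ i, t i = z := by simpa using (Finset.mem_filter.mp ht).2
  have hnot : ¬ ∀ i, 0 < lam (t i) := fun hall => hcon t hall hz'
  push_neg at hnot
  obtain ⟨i, hi⟩ := hnot
  exact Finset.prod_eq_zero (Finset.mem_univ i) (le_antisymm hi (h _))

noncomputable def sgnB (φ : (Fin n → ZMod 2) → Bool) (z : Fin n → ZMod 2) : ℝ :=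
  if φ z then 1 else -1

lemma sgnB_ne_zero (φ : (Fin n → ZMod 2) → Bool) (z) : sgnB φ z ≠ 0 := by
  unfold sgnB; split <;> norm_num

lemma sgnB_not (φ : (Fin n → ZMod 2) → Bool) (z) :
    sgnB (fun w => !(φ w)) z = -sgnB φ z := by
  unfold sgnB; cases h : φ z <;> simp [h]

noncomputable def bp (A : Finset (Fin n → ZMod 2)) : Fin n → ZMod 2 :=
  if h : A.Nonempty then h.choose else 0

lemma bp_mem {A : Finset (Fin n → ZMod 2)} (h : A.Nonempty) : bp A ∈ A := by
  unfold bp; rw [dif_pos h]; exact h.choose_spec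

/-- weight of the class `(A, φ)` at `u`. -/
noncomputable def wgt (A : Finset (Fin n → ZMod 2)) (φ : (Fin n → ZMod 2) → Bool)
    (u : (Fin n → ZMod 2) → ℝ) : ℝ :=
  if h : A.Nonempty then
    max 0 (A.inf' h (fun z => sgnB φ z * u z) - ∑ z ∈ Aᶜ, |u z|)
  else 0

lemma wgt_nonneg (A : Finset (Fin n → ZMod 2)) (φ) (u) : 0 ≤ wgt A φ u := by
  unfold wgt; split
  · exact le_max_left _ _
  · exact le_refl _

noncomputable def blk (k : ℕ) (u : (Fin n → ZMod 2) → ℝ) : ℝ :=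
  ∑ A ∈ Finset.univ.filter (fun A : Finset (Fin n → ZMod 2) => A.card = 2 ^ k),
    ∑ φ : (Fin n → ZMod 2) → Bool, wgt A φ u * sgnB φ (bp A)

lemma cont_inf' {X : Type*} [TopologicalSpace X] {ι : Type*} (A : Finset ι) (h : A.Nonempty)
    (g : ι → X → ℝ) (hg : ∀ i, Continuous (g i)) :
    Continuous fun x => A.inf' h fun i => g i x := by
  induction h using Finset.Nonempty.cons_induction with
  | singleton a =>
      have : (fun x => ({a} : Finset ι).inf' (Finset.singleton_nonempty a) fun i => g i x)
          = fun x => g a x := by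
        funext x
        exact Finset.inf'_singleton (f := fun i => g i x)
      rw [this]
      exact hg a
  | cons a s ha hs ih =>
      have : (fun x => (Finset.cons a s ha).inf' (Finset.cons_nonempty ha) fun i => g i x)
          = fun x => min (g a x) (s.inf' hs fun i => g i x) := by
        funext x
        exact Finset.inf'_cons hs (fun i => g i x)
      rw [this]
      exact (hg a).min ih

lemma wgt_cont (A : Finset (Fin n → ZMod 2)) (φ : (Fin n → ZMod 2) → Bool) :
    Continuous fun u : (Fin n → ZMod 2) → ℝ => wgt A φ u := by
  unfold wgt
  by_cases h : A.Nonempty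
  · simp only [dif_pos h]
    apply Continuous.max continuous_const
    apply Continuous.sub
    · exact cont_inf' A h (fun z (uu : (Fin n → ZMod 2) → ℝ) => sgnB φ z * uu z)
        (fun z => continuous_const.mul (continuous_apply z))
    · exact continuous_finset_sum _ fun z _ => (continuous_apply z).abs
  · simp only [dif_neg h]; exact continuous_const

lemma blk_cont (k : ℕ) :
    Continuous fun u : (Fin n → ZMod 2) → ℝ => blk k u := by
  unfold blk
  exact continuous_finset_sum _ fun A _ =>
    continuous_finset_sum _ fun φ _ => (wgt_cont A φ).mul continuous_const

noncomputable def notE : ((Fin n → ZMod 2) → Bool) ≃ ((Fin n → ZMod 2) → Bool) where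
  toFun φ := fun z => !(φ z)
  invFun φ := fun z => !(φ z)
  left_inv φ := by funext z; simp
  right_inv φ := by funext z; simp

lemma wgt_neg (A : Finset (Fin n → ZMod 2)) (φ) (u : (Fin n → ZMod 2) → ℝ) :
    wgt A φ (-u) = wgt A (fun z => !(φ z)) u := by
  unfold wgt
  by_cases h : A.Nonempty
  · simp only [dif_pos h]
    have h1 : (fun z => sgnB φ z * (-u) z) = fun z => sgnB (fun w => !(φ w)) z * u z := by
      funext z
      rw [sgnB_not]
      simp only [Pi.neg_apply]
      ring
    rw [h1]
    congr 1
    congr 1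
    apply Finset.sum_congr rfl
    intro z _
    simp
  · simp only [dif_neg h]

lemma blk_neg (k : ℕ) (u : (Fin n → ZMod 2) → ℝ) : blk k (-u) = -blk k u := by
  unfold blk
  rw [← Finset.sum_neg_distrib]
  apply Finset.sum_congr rfl
  intro A _
  have hterm : ∀ φ : (Fin n → ZMod 2) → Bool,
      wgt A φ (-u) * sgnB φ (bp A) = -(wgt A (notE φ) u * sgnB (notE φ) (bp A)) := by
    intro φ
    have h1 : wgt A φ (-u) = wgt A (notE φ) u := wgt_neg A φ u
    have h2 : sgnB (notE φ) (bp A) = -sgnB φ (bp A) := by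
      show sgnB (fun w => !(φ w)) (bp A) = -sgnB φ (bp A)
      rw [sgnB_not]
    rw [h1, h2]; ring
  calc ∑ φ : (Fin n → ZMod 2) → Bool, wgt A φ (-u) * sgnB φ (bp A)
      = ∑ φ : (Fin n → ZMod 2) → Bool,
          -(wgt A (notE φ) u * sgnB (notE φ) (bp A)) := by
        apply Finset.sum_congr rfl
        intro φ _
        exact hterm φ
  _ = -∑ φ, wgt A (notE φ) u * sgnB (notE φ) (bp A) := Finset.sum_neg_distrib _
  _ = -∑ φ, wgt A φ u * sgnB φ (bp A) := by
        rw [Equiv.sum_comp notE (fun φ => wgt A φ u * sgnB φ (bp A))]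

-- char two basics
lemma addself (g : Fin n → ZMod 2) : g + g = 0 := by
  funext i
  have : ∀ a : ZMod 2, a + a = 0 := by decide
  exact this (g i)

lemma odd_nsmul' (g : Fin n → ZMod 2) : ∀ m : ℕ, (2 * m + 1) • g = g := by
  intro m
  induction m with
  | zero => simp
  | succ m ih =>
      have h : 2 * (m + 1) + 1 = (2 * m + 1) + 2 := by ring
      rw [h, add_nsmul, ih, two_nsmul, addself, add_zero]

lemma simplex_rep {x : Fin n → ZMod 2} {v : (Fin n → ZMod 2) → ℝ}
    (hv : v ∈ hadamardSimplex n x) :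
    (∀ y, 0 ≤ ch x y * v y) ∧ (∑ y, ch x y * v y) = 1 := by
  have hconv : Convex ℝ {w : (Fin n → ZMod 2) → ℝ |
      (∀ y, 0 ≤ ch x y * w y) ∧ (∑ y, ch x y * w y) = 1} := by
    rintro w1 ⟨h1a, h1b⟩ w2 ⟨h2a, h2b⟩ a b ha hb hab
    constructor
    · intro y
      have e1 := h1a y
      have e2 := h2a y
      simp only [Pi.add_apply, Pi.smul_apply, smul_eq_mul]
      nlinarith
    · have hthis : ∀ y, ch x y * (a • w1 + b • w2) y
          = a * (ch x y * w1 y) + b * (ch x y * w2 y) := by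
        intro y
        simp only [Pi.add_apply, Pi.smul_apply, smul_eq_mul]
        ring
      rw [Finset.sum_congr rfl (fun y _ => hthis y), Finset.sum_add_distrib,
        ← Finset.mul_sum, ← Finset.mul_sum, h1b, h2b]
      simpa using hab
  apply convexHull_min ?_ hconv hv
  rintro w (⟨y, hy0, rfl⟩ | ⟨y, hy1, rfl⟩)
  · constructor
    · intro y'
      rcases eq_or_ne y' y with rfl | hne
      · rw [Pi.single_eq_same]
        unfold ch
        rw [if_pos hy0]
        norm_num
      · rw [Pi.single_eq_of_ne hne]
        simp
    · rw [Finset.sum_eq_single y]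
      · rw [Pi.single_eq_same]
        unfold ch
        rw [if_pos hy0]
        norm_num
      · intro b _ hb
        rw [Pi.single_eq_of_ne hb]
        ring
      · intro h
        exact absurd (Finset.mem_univ _) h
  · have hy0 : (∑ i, x i * y i) ≠ 0 := by
      rw [hy1]
      decide
    constructor
    · intro y'
      rcases eq_or_ne y' y with rfl | hne
      · simp only [Pi.neg_apply, Pi.single_eq_same]
        unfold ch
        rw [if_neg hy0]
        norm_num
      · simp only [Pi.neg_apply, Pi.single_eq_of_ne hne]
        simp
    · rw [Finset.sum_eq_single y]
      · simp only [Pi.neg_apply, Pi.single_eq_same]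
        unfold ch
        rw [if_neg hy0]
        norm_num
      · intro b _ hb
        simp only [Pi.neg_apply, Pi.single_eq_of_ne hb]
        ring
      · intro h
        exact absurd (Finset.mem_univ _) h

lemma coset_card (s₀ : Fin n → ZMod 2) (T : Set (Fin n → ZMod 2)) :
    ∃ k ≤ n, ∀ (A : Finset (Fin n → ZMod 2)),
      (∀ z, z ∈ A ↔ z + s₀ ∈ Submodule.span (ZMod 2) T) → A.card = 2 ^ k := by
  classical
  set U := Submodule.span (ZMod 2) T with hU
  refine ⟨Module.finrank (ZMod 2) U, ?_, ?_⟩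
  · calc Module.finrank (ZMod 2) U ≤ Module.finrank (ZMod 2) (Fin n → ZMod 2) :=
        Submodule.finrank_le U
    _ = n := by rw [Module.finrank_pi]; exact Fintype.card_fin n
  · intro A hA
    have himg : A = (Finset.univ.filter (fun b : Fin n → ZMod 2 => b ∈ U)).image
        (fun b => b + s₀) := by
      ext z
      simp only [Finset.mem_filter, Finset.mem_univ, true_and, Finset.mem_image]
      constructor
      · intro hz
        exact ⟨z + s₀, (hA z).mp hz, by rw [add_assoc, addself, add_zero]⟩
      · rintro ⟨b, hb, rfl⟩
        apply (hA _).mpr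
        rw [add_assoc, addself, add_zero]
        exact hb
    rw [himg, Finset.card_image_of_injective _ (add_left_injective s₀)]
    have hcs : Fintype.card {b : Fin n → ZMod 2 // b ∈ U}
        = (Finset.univ.filter (fun b : Fin n → ZMod 2 => b ∈ U)).card := by
      rw [Fintype.card_subtype]
    rw [← hcs]
    have hpow := Module.card_eq_pow_finrank (K := ZMod 2) (V := U)
    rw [ZMod.card] at hpow
    exact hpow

lemma span_iff_sum (lam : (Fin n → ZMod 2) → ℝ)
    (s₀ : Fin n → ZMod 2) (hs₀ : 0 < lam s₀) (z : Fin n → ZMod 2) :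
    z + s₀ ∈ Submodule.span (ZMod 2) ((fun s => s + s₀) '' {y | 0 < lam y}) ↔
    ∃ t : Fin (2 * n + 1) → Fin n → ZMod 2, (∀ i, 0 < lam (t i)) ∧ ∑ i, t i = z := by
  classical
  set N := 2 * n + 1 with hN
  set T : Set (Fin n → ZMod 2) := (fun s => s + s₀) '' {y | 0 < lam y} with hT
  constructor
  · intro hz
    obtain ⟨b, hbT, hbspan, hbind⟩ := exists_linearIndependent (ZMod 2) T
    have hbfin : b.Finite := Set.toFinite b
    set B := hbfin.toFinset with hB
    have hBb : (B : Set (Fin n → ZMod 2)) = b := hbfin.coe_toFinset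
    have hBsub : (B : Set (Fin n → ZMod 2)) ⊆ T := by rw [hBb]; exact hbT
    have hzB : z + s₀ ∈ Submodule.span (ZMod 2) (B : Set (Fin n → ZMod 2)) := by
      rw [hBb, hbspan]; exact hz
    obtain ⟨c, -, hc⟩ := Submodule.mem_span_finset.mp hzB
    set F := B.filter (fun i => c i = 1) with hF
    have hFsum : ∑ i ∈ F, i = z + s₀ := by
      rw [hF, ← hc, Finset.sum_filter]
      apply Finset.sum_congr rfl
      intro i _
      have hcases : c i = 0 ∨ c i = 1 := by
        have : ∀ a : ZMod 2, a = 0 ∨ a = 1 := by decide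
        exact this (c i)
      rcases hcases with h | h
      · rw [if_neg (by rw [h]; decide), h, zero_smul]
      · rw [if_pos h, h, one_smul]
    have hBind : LinearIndependent (ZMod 2)
        (fun x => x : {x // x ∈ B} → (Fin n → ZMod 2)) := by
      have hmemiff : ∀ x, x ∈ B ↔ x ∈ b := fun x => by
        rw [← hBb]; exact Finset.mem_coe.symm
      exact hbind.comp
        (fun x : {x // x ∈ B} => (⟨x.1, (hmemiff x.1).mp x.2⟩ : {x // x ∈ b}))
        (fun a b hab => by
          apply Subtype.ext
          have := congrArg Subtype.val hab
          simpa using this)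
    have hFcard : F.card ≤ n := by
      calc F.card ≤ B.card := Finset.card_filter_le _ _
      _ ≤ Module.finrank (ZMod 2) (Fin n → ZMod 2) :=
          LinearIndependent.finset_card_le_finrank hBind
      _ = n := by rw [Module.finrank_pi]; exact Fintype.card_fin n
    set r := F.card with hr
    have hrN : r ≤ N := by omega
    set e := F.equivFin with he
    set g : ℕ → (Fin n → ZMod 2) :=
      fun i => if h : i < r then ((e.symm ⟨i, h⟩ : Fin n → ZMod 2) + s₀) else s₀ with hg
    have hgS : ∀ i, 0 < lam (g i) := by
      intro i
      rw [hg]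
      dsimp only
      split
      · next h =>
        have hmem : ((e.symm ⟨i, h⟩ : {x // x ∈ F}) : Fin n → ZMod 2) ∈ F :=
          (e.symm ⟨i, h⟩).2
        have hB' : ((e.symm ⟨i, h⟩ : {x // x ∈ F}) : Fin n → ZMod 2) ∈ B :=
          Finset.filter_subset _ _ hmem
        have hTmem : ((e.symm ⟨i, h⟩ : {x // x ∈ F}) : Fin n → ZMod 2) ∈ T :=
          hBsub hB'
        obtain ⟨s, hs, hseq⟩ := hTmem
        have hss : ((e.symm ⟨i, h⟩ : {x // x ∈ F}) : Fin n → ZMod 2) + s₀ = s := by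
          rw [← hseq, add_assoc, addself, add_zero]
        rw [hss]
        exact hs
      · exact hs₀
    refine ⟨fun i => g i, fun i => hgS i, ?_⟩
    rw [Fin.sum_univ_eq_sum_range g N]
    rw [Finset.range_eq_Ico, ← Finset.sum_Ico_consecutive _ (Nat.zero_le r) hrN]
    have h1 : ∑ i ∈ Finset.Ico 0 r, g i = (∑ b ∈ F, b) + r • s₀ := by
      rw [← Finset.range_eq_Ico, ← Fin.sum_univ_eq_sum_range g r]
      have hgi : ∀ i : Fin r, g i = (e.symm i : Fin n → ZMod 2) + s₀ := by
        intro i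
        rw [hg]
        dsimp only
        rw [dif_pos i.2]
      rw [Finset.sum_congr rfl (fun i _ => hgi i)]
      rw [Equiv.sum_comp e.symm (fun b : {x // x ∈ F} => (b : Fin n → ZMod 2) + s₀)]
      rw [Finset.sum_coe_sort F (fun b => b + s₀)]
      rw [Finset.sum_add_distrib, Finset.sum_const, hr]
    have h2 : ∑ i ∈ Finset.Ico r N, g i = (N - r) • s₀ := by
      have hgc : ∀ i ∈ Finset.Ico r N, g i = s₀ := by
        intro i hi
        rw [hg]
        dsimp only
        have hi' := Finset.mem_Ico.mp hi
        rw [dif_neg (by omega)]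
      rw [Finset.sum_congr rfl hgc, Finset.sum_const, Nat.card_Ico]
    rw [h1, h2, hFsum, add_assoc, ← add_nsmul]
    have hrr : r + (N - r) = N := by omega
    rw [hrr, hN, odd_nsmul', add_assoc, addself, add_zero]
  · rintro ⟨t, htpos, htsum⟩
    have hzz : z + s₀ = ∑ i : Fin N, (t i + s₀) := by
      rw [Finset.sum_add_distrib, Finset.sum_const, Finset.card_univ, Fintype.card_fin,
        htsum, hN, odd_nsmul']
    rw [hzz]
    apply Submodule.sum_mem
    intro i _
    apply Submodule.subset_span
    exact ⟨t i, htpos i, rfl⟩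

/-- The equivariant map. -/
noncomputable def fmap (n : ℕ) (v : (Fin n → ZMod 2) → ℝ) : Fin (2 * n + 2) → ℝ :=
  fun j => if (j : ℕ) ≤ n then blk (j : ℕ) (CP (2 * n + 1) v) else 0

lemma fmap_cont : Continuous (fmap n) := by
  apply continuous_pi
  intro j
  by_cases h : (j : ℕ) ≤ n
  · simp only [fmap, if_pos h]
    exact (blk_cont (j : ℕ)).comp (continuous_pi fun z => CP_cont (2 * n + 1) z)
  · simp only [fmap, if_neg h]
    exact continuous_const

lemma fmap_neg (v : (Fin n → ZMod 2) → ℝ) : fmap n (-v) = -fmap n v := by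
  funext j
  simp only [fmap, Pi.neg_apply]
  by_cases h : (j : ℕ) ≤ n
  · rw [if_pos h, if_pos h]
    have hCP : CP (2 * n + 1) (-v) = -(CP (2 * n + 1) v) :=
      funext fun z => CP_neg (2 * n + 1) ⟨n, by ring⟩ v z
    rw [hCP, blk_neg]
  · rw [if_neg h, if_neg h, neg_zero]

lemma simplex_fmap_ne (x : Fin n → ZMod 2) (v : (Fin n → ZMod 2) → ℝ)
    (hv : v ∈ hadamardSimplex n x) : fmap n v ≠ 0 := by
  classical
  obtain ⟨hpos, hsum⟩ := simplex_rep hv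
  set lam : (Fin n → ZMod 2) → ℝ := fun y => ch x y * v y with hlam
  have hlam0 : ∀ y, 0 ≤ lam y := hpos
  have hv_eq : v = fun y => ch x y * lam y := by
    funext y
    rw [hlam]
    dsimp only
    rw [← mul_assoc, ch_mul_self, one_mul]
  set P := CP (2 * n + 1) lam with hP
  set u := CP (2 * n + 1) v with hu
  have huP : ∀ z, u z = ch x z * P z := by
    intro z
    rw [hu, hP]
    conv_lhs => rw [hv_eq]
    exact CP_ch (2 * n + 1) x lam z
  have hP0 : ∀ z, 0 ≤ P z := fun z => CP_nonneg (2 * n + 1) lam hlam0 z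
  have hex : ∃ s₀, 0 < lam s₀ := by
    by_contra h
    push_neg at h
    have h0 : ∑ y, lam y = 0 :=
      Finset.sum_eq_zero fun y _ => le_antisymm (h y) (hlam0 y)
    rw [hsum] at h0
    norm_num at h0
  obtain ⟨s₀, hs₀⟩ := hex
  set U := Submodule.span (ZMod 2) ((fun s => s + s₀) '' {y | 0 < lam y}) with hUU
  have hPsupp : ∀ z, 0 < P z ↔ z + s₀ ∈ U := by
    intro z
    constructor
    · intro h
      apply (span_iff_sum lam s₀ hs₀ z).mpr
      exact CP_pos_exists (2 * n + 1) lam hlam0 z (ne_of_gt h)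
    · intro h
      obtain ⟨t, ht, hts⟩ := (span_iff_sum lam s₀ hs₀ z).mp h
      have := CP_pos (2 * n + 1) lam hlam0 t ht
      rw [hts] at this
      exact this
  set A := Finset.univ.filter (fun z => u z ≠ 0) with hA
  have hmemA : ∀ z, z ∈ A ↔ z + s₀ ∈ U := by
    intro z
    rw [hA]
    simp only [Finset.mem_filter, Finset.mem_univ, true_and]
    rw [huP z]
    constructor
    · intro hne
      have hPne : P z ≠ 0 := fun h0 => hne (by rw [h0, mul_zero])
      exact (hPsupp z).mp (lt_of_le_of_ne (hP0 z) (Ne.symm hPne))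
    · intro hUm
      exact mul_ne_zero (ch_ne_zero x z) (ne_of_gt ((hPsupp z).mpr hUm))
  obtain ⟨k₀, hk₀n, hcard⟩ := coset_card s₀ ((fun s => s + s₀) '' {y | 0 < lam y})
  have hAcard : A.card = 2 ^ k₀ := hcard A hmemA
  set φ : (Fin n → ZMod 2) → Bool := fun z => if 0 ≤ u z then true else false with hφ
  have hsgn : ∀ z, sgnB φ z * u z = |u z| := by
    intro z
    unfold sgnB
    rw [hφ]
    dsimp only
    by_cases h : 0 ≤ u z
    · simp only [if_pos h]
      simp [abs_of_nonneg h]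
    · simp only [if_neg h]
      push_neg at h
      simp [abs_of_neg h]
  have hAne : A.Nonempty := by
    refine ⟨s₀, (hmemA s₀).mpr ?_⟩
    rw [addself]
    exact Submodule.zero_mem U
  have hm : 0 < A.inf' hAne (fun z => sgnB φ z * u z) := by
    rw [Finset.lt_inf'_iff]
    intro z hz
    rw [hsgn z]
    have hne : u z ≠ 0 := by
      have := (Finset.mem_filter.mp (by rw [hA] at hz; exact hz)).2
      exact this
    exact abs_pos.mpr hne
  have hOff : ∑ z ∈ Aᶜ, |u z| = 0 := by
    apply Finset.sum_eq_zero
    intro z hz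
    have hz' : z ∉ A := Finset.mem_compl.mp hz
    have hu0 : u z = 0 := by
      by_contra hne
      exact hz' (by rw [hA]; simp [hne])
    rw [hu0, abs_zero]
  have hwA : 0 < wgt A φ u := by
    unfold wgt
    rw [dif_pos hAne, hOff, sub_zero]
    exact lt_max_of_lt_right hm
  have hblk : blk k₀ u ≠ 0 := by
    have hterm : ∀ A' ∈ Finset.univ.filter
          (fun A' : Finset (Fin n → ZMod 2) => A'.card = 2 ^ k₀),
        ∀ φ' : (Fin n → ZMod 2) → Bool,
        wgt A' φ' u * sgnB φ' (bp A') = wgt A' φ' u * sgnB φ (bp A) := by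
      intro A' hA' φ'
      rcases eq_or_ne (wgt A' φ' u) 0 with h0 | h0
      · rw [h0, zero_mul, zero_mul]
      · have hA'ne : A'.Nonempty := by
          by_contra h
          apply h0
          unfold wgt
          rw [dif_neg h]
        have hactive : ∑ z ∈ A'ᶜ, |u z| < A'.inf' hA'ne (fun z => sgnB φ' z * u z) := by
          by_contra hle
          push_neg at hle
          apply h0
          unfold wgt
          rw [dif_pos hA'ne, max_eq_left (by linarith)]
        have hOffA' : 0 ≤ ∑ z ∈ A'ᶜ, |u z| :=
          Finset.sum_nonneg fun z _ => abs_nonneg _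
        have hsub : A' ⊆ A := by
          intro z hz
          by_contra hzA
          have hu0 : u z = 0 := by
            by_contra hne
            exact hzA (by rw [hA]; simp [hne])
          have h1 : A'.inf' hA'ne (fun z => sgnB φ' z * u z) ≤ sgnB φ' z * u z :=
            Finset.inf'_le _ hz
          rw [hu0, mul_zero] at h1
          linarith
        have hAA : A' = A := by
          apply Finset.eq_of_subset_of_card_le hsub
          rw [hAcard, (Finset.mem_filter.mp hA').2]
        have hz₀ : bp A' ∈ A' := bp_mem hA'ne
        have hz₀A : bp A' ∈ A := hsub hz₀
        have h1 : 0 < sgnB φ' (bp A') * u (bp A') := by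
          have hle := Finset.inf'_le (fun z => sgnB φ' z * u z) hz₀
          calc (0 : ℝ) ≤ ∑ z ∈ A'ᶜ, |u z| := hOffA'
          _ < A'.inf' hA'ne (fun z => sgnB φ' z * u z) := hactive
          _ ≤ sgnB φ' (bp A') * u (bp A') := hle
        have h2 : 0 < sgnB φ (bp A') * u (bp A') := by
          rw [hsgn (bp A')]
          apply abs_pos.mpr
          have hmemfil : bp A' ∈ Finset.univ.filter (fun z => u z ≠ 0) := by
            rw [hA] at hz₀A; exact hz₀A
          exact (Finset.mem_filter.mp hmemfil).2
        have hcases : ∀ (ψ : (Fin n → ZMod 2) → Bool) (w : Fin n → ZMod 2),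
            sgnB ψ w = 1 ∨ sgnB ψ w = -1 := by
          intro ψ w
          unfold sgnB
          split
          · exact Or.inl rfl
          · exact Or.inr rfl
        have hseq : sgnB φ' (bp A') = sgnB φ (bp A') := by
          rcases hcases φ' (bp A') with ha | ha <;> rcases hcases φ (bp A') with hb | hb
          · rw [ha, hb]
          · exfalso; rw [ha] at h1; rw [hb] at h2; nlinarith
          · exfalso; rw [ha] at h1; rw [hb] at h2; nlinarith
          · rw [ha, hb]
        rw [← hAA, hseq]
    have hsum_eq : blk k₀ u
        = (∑ A' ∈ Finset.univ.filter
            (fun A' : Finset (Fin n → ZMod 2) => A'.card = 2 ^ k₀),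
            ∑ φ' : (Fin n → ZMod 2) → Bool, wgt A' φ' u) * sgnB φ (bp A) := by
      unfold blk
      rw [Finset.sum_mul]
      apply Finset.sum_congr rfl
      intro A' hA'
      rw [Finset.sum_mul]
      apply Finset.sum_congr rfl
      intro φ' _
      exact hterm A' hA' φ'
    have hAmem : A ∈ Finset.univ.filter
        (fun A' : Finset (Fin n → ZMod 2) => A'.card = 2 ^ k₀) := by
      simp [hAcard]
    have hposS : 0 < ∑ A' ∈ Finset.univ.filter
        (fun A' : Finset (Fin n → ZMod 2) => A'.card = 2 ^ k₀),
        ∑ φ' : (Fin n → ZMod 2) → Bool, wgt A' φ' u := by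
      have hstep1 : 0 < ∑ φ' : (Fin n → ZMod 2) → Bool, wgt A φ' u :=
        lt_of_lt_of_le hwA
          (Finset.single_le_sum (fun φ' _ => wgt_nonneg A φ' u) (Finset.mem_univ φ))
      exact lt_of_lt_of_le hstep1
        (Finset.single_le_sum
          (fun A' _ => Finset.sum_nonneg fun φ' _ => wgt_nonneg A' φ' u) hAmem)
    rw [hsum_eq]
    exact mul_ne_zero (ne_of_gt hposS) (sgnB_ne_zero φ (bp A))
  intro hzero
  have hk2 : k₀ < 2 * n + 2 := by omega
  have hj := congrFun hzero ⟨k₀, hk2⟩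
  simp only [fmap, Pi.zero_apply] at hj
  rw [if_pos (by simpa using hk₀n)] at hj
  exact hblk (by rw [hu]; exact hj)

end HadamardIndexAux

/-- Upper bound on the ℤ₂-index of the Hadamard sign complex: there is a
ℤ₂-equivariant continuous map `|S(H)| → ℝ^{2n+2} \ {0}`, i.e.
`ind_{ℤ₂}(S(H)) ≤ 2n + 1`. -/
theorem hadamard_index_upper (n : ℕ) :
    ∃ f : ((Fin n → ZMod 2) → ℝ) → (Fin (2 * n + 2) → ℝ),
      ContinuousOn f (hadamardReal n) ∧
      (∀ v ∈ hadamardReal n, f v ≠ 0) ∧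
      (∀ v ∈ hadamardReal n, f (-v) = -f v) := by
  refine ⟨HadamardIndexAux.fmap n, HadamardIndexAux.fmap_cont.continuousOn, ?_, ?_⟩
  · intro v hv
    rw [hadamardReal, Set.mem_iUnion] at hv
    obtain ⟨x, hx⟩ := hv
    rcases hx with hx | hx
    · exact HadamardIndexAux.simplex_fmap_ne x v hx
    · have hneg : -v ∈ hadamardSimplex n x := Set.mem_neg.mp hx
      have h1 : HadamardIndexAux.fmap n (-v) ≠ 0 :=
        HadamardIndexAux.simplex_fmap_ne x (-v) hneg
      rw [HadamardIndexAux.fmap_neg] at h1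
      intro h0
      exact h1 (by rw [h0, neg_zero])
  · intro v _
    exact HadamardIndexAux.fmap_neg v
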